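/- Let ν be a probability measure on Cantor space with full support, and let A : 2^{<ℕ} → ℝ≥0 be increasing with A(∅) = 0 and A(σ0) = A(σ1) for all strings σ. Then there exists a probability measure μ on Cantor space with full support such that A is the predictable process of the Doob decomposition of the ν-submartingale L(σ) = −ln(μ([σ])/ν([σ])); equivalently, for all σ and ι: A(σι) − A(σ) = (L(σ0)·ν(σ0|σ) + L(σ1)·ν(σ1|σ)) − L(σ), with L(∅) = 0. -/

import Mathlib

open MeasureTheory Filter Topology

/-- Cantor space `2^ℕ`. -/
abbrev Cantor : Type := ℕ → Bool

/-- The basic clopen cylinder determined by a finite binary string. -/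
def cyl (σ : List Bool) : Set Cantor := {ω | ∀ i : Fin σ.length, ω i = σ.get i}

/-- The first `n` bits of `ω`, as a finite binary string. -/
def pre (ω : Cantor) (n : ℕ) : List Bool := (List.range n).map ω

/-- A measure on Cantor space has full support if every cylinder has positive measure. -/
def FullSupport (ν : Measure Cantor) : Prop := ∀ σ : List Bool, 0 < ν (cyl σ)

/-- Conditional probability `ν([τ] | [σ]) = ν([τ])/ν([σ])` (intended for `τ` extending `σ`). -/
noncomputable def cp (ν : Measure Cantor) (τ σ : List Bool) : ℝ :=
  (ν (cyl τ)).toReal / (ν (cyl σ)).toReal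

/-- The conditional measure `ν(· | [σ]) = ν(· ∩ [σ]) / ν([σ])`. -/
noncomputable def condMeas (ν : Measure Cantor) (σ : List Bool) : Measure Cantor :=
  (ν (cyl σ))⁻¹ • ν.restrict (cyl σ)

/-- The σ-algebra generated by the length-`k` cylinders. -/
def Falg (k : ℕ) : MeasurableSpace Cantor :=
  MeasurableSpace.generateFrom {A | ∃ σ : List Bool, σ.length = k ∧ A = cyl σ}

/-- Total variational distance between two measures restricted to a σ-algebra `G`. -/
noncomputable def tv (G : MeasurableSpace Cantor) (ρ τ : @Measure Cantor MeasurableSpace.pi) : ℝ :=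
  ⨆ A : {A : Set Cantor // MeasurableSet[G] A}, |(ρ A.1).toReal - (τ A.1).toReal|

/-- A dyadic `ν`-martingale: `M(σ) = M(σ0)ν(σ0|σ) + M(σ1)ν(σ1|σ)`. -/
def IsDyMart (ν : Measure Cantor) (M : List Bool → ℝ) : Prop :=
  ∀ σ : List Bool,
    M σ = M (σ ++ [false]) * cp ν (σ ++ [false]) σ + M (σ ++ [true]) * cp ν (σ ++ [true]) σ

/-- A dyadic `ν`-submartingale: `L(σ) ≤ L(σ0)ν(σ0|σ) + L(σ1)ν(σ1|σ)`. -/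
def IsDySubmart (ν : Measure Cantor) (L : List Bool → ℝ) : Prop :=
  ∀ σ : List Bool,
    L σ ≤ L (σ ++ [false]) * cp ν (σ ++ [false]) σ + L (σ ++ [true]) * cp ν (σ ++ [true]) σ

/-- A dyadic function is increasing if it is monotone along prefixes. -/
def IncrDy (A : List Bool → ℝ) : Prop := ∀ σ τ : List Bool, σ <+: τ → A σ ≤ A τ

/-- The dyadic `ν`-submartingale `L(σ) = −ln(μ([σ])/ν([σ]))`. -/
noncomputable def Lfun (μ ν : Measure Cantor) (σ : List Bool) : ℝ :=
  -Real.log ((μ (cyl σ)).toReal / (ν (cyl σ)).toReal)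

lemma exists_uw {p c : ℝ} (hp0 : 0 < p) (hp1 : p < 1) (hc : 0 ≤ c) :
    ∃ u w : ℝ, 0 < u ∧ 0 < w ∧ p*u + (1-p)*w = 1 ∧
      p*Real.log u + (1-p)*Real.log w = -c := by
  have h1p : 0 < 1 - p := by linarith
  set ε : ℝ := Real.exp ((-c + (1-p)*Real.log (1-p))/p) with hε
  have hεpos : 0 < ε := Real.exp_pos _
  have hlog1p : Real.log (1-p) ≤ 0 := Real.log_nonpos (by linarith) (by linarith)
  have hε1 : ε ≤ 1 := by
    rw [hε, Real.exp_le_one_iff]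
    apply div_nonpos_of_nonpos_of_nonneg _ hp0.le
    nlinarith
  set g : ℝ → ℝ := fun u => p * Real.log u + (1-p) * Real.log ((1 - p*u)/(1-p)) with hg
  have hnum : ∀ x ∈ Set.Icc ε 1, 0 < 1 - p * x := by
    intro x hx
    have : p * x ≤ p * 1 := mul_le_mul_of_nonneg_left hx.2 hp0.le
    linarith
  have hcont : ContinuousOn g (Set.Icc ε 1) := by
    apply ContinuousOn.add
    · exact (Real.continuousOn_log.mono (by
        intro x hx h; simp at h; rw [h] at hx; exact absurd hx.1 (not_le.2 hεpos))).const_smul p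
        |>.congr (by intro x hx; simp [smul_eq_mul])
    · apply ContinuousOn.mul continuousOn_const
      apply ContinuousOn.log
      · exact (continuousOn_const.sub (continuousOn_const.mul continuousOn_id)).div_const _
      · intro x hx
        exact ne_of_gt (div_pos (hnum x hx) h1p)
  have hg1 : g 1 = 0 := by
    simp [hg, Real.log_one, div_self (ne_of_gt h1p)]
  have hgε : g ε ≤ -c := by
    have hlogε : Real.log ε = (-c + (1-p)*Real.log (1-p))/p := Real.log_exp _
    have hw : Real.log ((1 - p*ε)/(1-p)) ≤ -Real.log (1-p) := by
      rw [Real.log_div (ne_of_gt (hnum ε ⟨le_refl _, hε1⟩)) (ne_of_gt h1p)]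
      have : Real.log (1 - p*ε) ≤ 0 :=
        Real.log_nonpos (by nlinarith [hnum ε ⟨le_refl _, hε1⟩]) (by nlinarith)
      linarith
    have : p * Real.log ε = -c + (1-p)*Real.log (1-p) := by
      rw [hlogε]; field_simp
    simp only [hg]
    nlinarith [mul_le_mul_of_nonneg_left hw h1p.le]
  have hmem : -c ∈ Set.Icc (g ε) (g 1) := ⟨hgε, by rw [hg1]; linarith⟩
  obtain ⟨u, hu, hgu⟩ := intermediate_value_Icc hε1 hcont hmem
  refine ⟨u, (1 - p*u)/(1-p), lt_of_lt_of_le hεpos hu.1, div_pos (hnum u hu) h1p, ?_, hgu⟩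
  field_simp
  ring
lemma exists_xy (l : ℝ) {p c : ℝ} (hp0 : 0 < p) (hp1 : p < 1) (hc : 0 ≤ c) :
    ∃ xy : ℝ × ℝ, p * xy.1 + (1-p) * xy.2 = l + c ∧
      p * Real.exp (-xy.1) + (1-p) * Real.exp (-xy.2) = Real.exp (-l) := by
  obtain ⟨u, w, hu, hw, h1, h2⟩ := exists_uw hp0 hp1 hc
  refine ⟨(l - Real.log u, l - Real.log w), by push_cast; ring_nf; linarith, ?_⟩
  have e1 : Real.exp (-(l - Real.log u)) = Real.exp (-l) * u := by
    rw [neg_sub, sub_eq_add_neg, Real.exp_add, Real.exp_log hu, mul_comm]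
  have e2 : Real.exp (-(l - Real.log w)) = Real.exp (-l) * w := by
    rw [neg_sub, sub_eq_add_neg, Real.exp_add, Real.exp_log hw, mul_comm]
  simp only [e1, e2]
  nlinarith [Real.exp_pos (-l)]

noncomputable def solve (p c l : ℝ) : ℝ × ℝ :=
  if h : 0 < p ∧ p < 1 ∧ 0 ≤ c then Classical.choose (exists_xy l h.1 h.2.1 h.2.2) else (l, l)

lemma solve_spec {p c : ℝ} (l : ℝ) (hp0 : 0 < p) (hp1 : p < 1) (hc : 0 ≤ c) :
    p * (solve p c l).1 + (1-p) * (solve p c l).2 = l + c ∧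
    p * Real.exp (-(solve p c l).1) + (1-p) * Real.exp (-(solve p c l).2) = Real.exp (-l) := by
  rw [solve, dif_pos ⟨hp0, hp1, hc⟩]
  exact Classical.choose_spec (exists_xy l hp0 hp1 hc)
open MeasureTheory

@[simp] lemma pre_length (ω : Cantor) (n : ℕ) : (pre ω n).length = n := by simp [pre]

lemma pre_succ (ω : Cantor) (n : ℕ) : pre ω (n+1) = pre ω n ++ [ω n] := by
  simp [pre, List.range_succ]

lemma mem_cyl_iff {ω : Cantor} {σ : List Bool} : ω ∈ cyl σ ↔ pre ω σ.length = σ := by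
  constructor
  · intro h
    apply List.ext_getElem (by simp)
    intro i h1 h2
    simpa [pre] using h ⟨i, h2⟩
  · intro h i
    have h1 : (pre ω σ.length)[(i:ℕ)]? = σ[(i:ℕ)]? := by rw [h]
    rw [List.getElem?_eq_getElem (by simp [i.2]), List.getElem?_eq_getElem i.2] at h1
    simpa [pre] using h1

lemma cyl_nil : cyl [] = Set.univ := by
  ext ω; simp [cyl]

lemma cyl_concat (σ : List Bool) (ι : Bool) :
    cyl (σ ++ [ι]) = cyl σ ∩ {ω | ω σ.length = ι} := by
  ext ω
  simp only [mem_cyl_iff, Set.mem_inter_iff, Set.mem_setOf_eq, List.length_append,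
    List.length_singleton, pre_succ]
  constructor
  · intro h
    have h2 := List.append_inj h (by simp)
    exact ⟨h2.1, by simpa using h2.2⟩
  · rintro ⟨h1, h2⟩; rw [h1, h2]

lemma cyl_split (σ : List Bool) :
    cyl σ = cyl (σ ++ [false]) ∪ cyl (σ ++ [true]) := by
  rw [cyl_concat, cyl_concat, ← Set.inter_union_distrib_left]
  ext ω; simp [Bool.eq_false_or_eq_true (ω σ.length)]

lemma cyl_disj (σ : List Bool) : Disjoint (cyl (σ ++ [false])) (cyl (σ ++ [true])) := by
  rw [cyl_concat, cyl_concat]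
  apply Set.disjoint_left.2
  rintro ω ⟨-, h1⟩ ⟨-, h2⟩
  simp only [Set.mem_setOf_eq] at h1 h2
  rw [h1] at h2; exact Bool.false_ne_true h2

lemma cyl_measurable (σ : List Bool) : MeasurableSet (cyl σ) := by
  have : cyl σ = ⋂ i : Fin σ.length, {ω : Cantor | ω i = σ.get i} := by
    ext ω; simp [cyl]
  rw [this]
  exact MeasurableSet.iInter fun i => (measurable_pi_apply (i : ℕ)) (MeasurableSet.singleton _)

open MeasureTheory



section
variable (ν : Measure Cantor) [IsProbabilityMeasure ν] (hν : FullSupport ν)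
include hν

lemma nur_pos (σ : List Bool) : 0 < (ν (cyl σ)).toReal :=
  ENNReal.toReal_pos (hν σ).ne' (measure_ne_top ν _)

omit hν in
lemma nur_add (σ : List Bool) : (ν (cyl σ)).toReal =
    (ν (cyl (σ ++ [false]))).toReal + (ν (cyl (σ ++ [true]))).toReal := by
  rw [cyl_split σ, measure_union (cyl_disj σ) (cyl_measurable _),
    ENNReal.toReal_add (measure_ne_top ν _) (measure_ne_top ν _)]

lemma p_pos (σ : List Bool) : 0 < cp ν (σ ++ [false]) σ :=
  div_pos (nur_pos ν hν _) (nur_pos ν hν _)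

lemma p_lt_one (σ : List Bool) : cp ν (σ ++ [false]) σ < 1 := by
  rw [cp, div_lt_one (nur_pos ν hν σ), nur_add ν σ]
  nlinarith [nur_pos ν hν (σ ++ [true])]

lemma cp_true (σ : List Bool) : cp ν (σ ++ [true]) σ = 1 - cp ν (σ ++ [false]) σ := by
  have h := nur_add ν σ
  rw [cp, cp, eq_sub_iff_add_eq, ← add_div, add_comm, ← h,
    div_self (nur_pos ν hν σ).ne']

end

noncomputable def LF (ν : Measure Cantor) (A : List Bool → ℝ) : List Bool → ℝ
  | [] => 0
  | ι :: ρ =>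
      if ι then (solve (cp ν (ρ.reverse ++ [false]) ρ.reverse)
        (A (ρ.reverse ++ [false]) - A ρ.reverse) (LF ν A ρ)).2
      else (solve (cp ν (ρ.reverse ++ [false]) ρ.reverse)
        (A (ρ.reverse ++ [false]) - A ρ.reverse) (LF ν A ρ)).1

noncomputable def Ldy (ν : Measure Cantor) (A : List Bool → ℝ) (σ : List Bool) : ℝ :=
  LF ν A σ.reverse

lemma Ldy_nil (ν : Measure Cantor) (A : List Bool → ℝ) : Ldy ν A [] = 0 := rfl

lemma Ldy_concat (ν : Measure Cantor) (A : List Bool → ℝ) (σ : List Bool) (ι : Bool) :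
    Ldy ν A (σ ++ [ι]) =
      if ι then (solve (cp ν (σ ++ [false]) σ) (A (σ ++ [false]) - A σ) (Ldy ν A σ)).2
      else (solve (cp ν (σ ++ [false]) σ) (A (σ ++ [false]) - A σ) (Ldy ν A σ)).1 := by
  have : (σ ++ [ι]).reverse = ι :: σ.reverse := by simp
  rw [Ldy, this, LF]
  simp [Ldy]

section
variable (ν : Measure Cantor) [IsProbabilityMeasure ν] (hν : FullSupport ν)
variable (A : List Bool → ℝ)
include hν

lemma Ldy_spec (hinc : ∀ σ τ : List Bool, σ <+: τ → A σ ≤ A τ) (σ : List Bool) :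
    cp ν (σ ++ [false]) σ * Ldy ν A (σ ++ [false]) +
      (1 - cp ν (σ ++ [false]) σ) * Ldy ν A (σ ++ [true]) =
      Ldy ν A σ + (A (σ ++ [false]) - A σ) ∧
    cp ν (σ ++ [false]) σ * Real.exp (-(Ldy ν A (σ ++ [false]))) +
      (1 - cp ν (σ ++ [false]) σ) * Real.exp (-(Ldy ν A (σ ++ [true]))) =
      Real.exp (-(Ldy ν A σ)) := by
  have hc : 0 ≤ A (σ ++ [false]) - A σ := by
    have := hinc σ (σ ++ [false]) ⟨[false], rfl⟩
    linarith
  have hs := solve_spec (Ldy ν A σ) (p_pos ν hν σ) (p_lt_one ν hν σ) hc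
  rw [Ldy_concat, Ldy_concat]
  simpa using hs

noncomputable def mfun (σ : List Bool) : ℝ := Real.exp (-(Ldy ν A σ)) * (ν (cyl σ)).toReal

lemma mfun_pos (σ : List Bool) : 0 < mfun ν A σ :=
  mul_pos (Real.exp_pos _) (nur_pos ν hν σ)

omit hν in
lemma mfun_nil : mfun ν A [] = 1 := by
  rw [mfun, Ldy_nil, cyl_nil]
  simp

lemma mfun_add (hinc : ∀ σ τ : List Bool, σ <+: τ → A σ ≤ A τ) (σ : List Bool) :
    mfun ν A σ = mfun ν A (σ ++ [false]) + mfun ν A (σ ++ [true]) := by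
  have hp := p_pos ν hν σ
  have hν0 : (ν (cyl (σ ++ [false]))).toReal = cp ν (σ ++ [false]) σ * (ν (cyl σ)).toReal := by
    rw [cp, div_mul_cancel₀ _ (nur_pos ν hν σ).ne']
  have hν1 : (ν (cyl (σ ++ [true]))).toReal =
      (1 - cp ν (σ ++ [false]) σ) * (ν (cyl σ)).toReal := by
    rw [← cp_true ν hν σ, cp, div_mul_cancel₀ _ (nur_pos ν hν σ).ne']
  have hs := (Ldy_spec ν hν A hinc σ).2
  rw [mfun, mfun, mfun, hν0, hν1, ← hs]
  ring

end

noncomputable def leftF (ν : Measure Cantor) (A : List Bool → ℝ) : List Bool → ℝ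
  | [] => 0
  | ι :: ρ => leftF ν A ρ + if ι then mfun ν A (ρ.reverse ++ [false]) else 0

noncomputable def leftE (ν : Measure Cantor) (A : List Bool → ℝ) (σ : List Bool) : ℝ :=
  leftF ν A σ.reverse

lemma leftE_nil (ν : Measure Cantor) (A : List Bool → ℝ) : leftE ν A [] = 0 := rfl

lemma leftE_concat (ν : Measure Cantor) (A : List Bool → ℝ) (σ : List Bool) (ι : Bool) :
    leftE ν A (σ ++ [ι]) = leftE ν A σ + if ι then mfun ν A (σ ++ [false]) else 0 := by
  have : (σ ++ [ι]).reverse = ι :: σ.reverse := by simp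
  rw [leftE, this, leftF]
  simp [leftE]

section
variable (ν : Measure Cantor) [IsProbabilityMeasure ν] (hν : FullSupport ν)
variable (A : List Bool → ℝ) (hinc : ∀ σ τ : List Bool, σ <+: τ → A σ ≤ A τ)
include hν hinc

lemma leftE_bounds (σ : List Bool) :
    0 ≤ leftE ν A σ ∧ leftE ν A σ + mfun ν A σ ≤ 1 := by
  induction σ using List.reverseRecOn with
  | nil => rw [leftE_nil, mfun_nil]; norm_num
  | append_singleton τ ι ih =>
    have hsplit := mfun_add ν hν A hinc τ
    have h0 := mfun_pos ν hν A (τ ++ [false])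
    have h1 := mfun_pos ν hν A (τ ++ [true])
    rw [leftE_concat]
    cases ι <;> simp only [if_true, if_false, Bool.false_eq_true] <;>
      constructor <;> first
      | linarith [ih.1, ih.2]
      | (simp only [if_false]; linarith [ih.1, ih.2])
end

noncomputable def bitAt (ν : Measure Cantor) (A : List Bool → ℝ) (x : ℝ) (σ : List Bool) :
    Bool :=
  @decide (leftE ν A σ + mfun ν A (σ ++ [false]) ≤ x) (Classical.propDecidable _)

lemma bitAt_eq_true {ν : Measure Cantor} {A : List Bool → ℝ} {x : ℝ} {σ : List Bool} :
    bitAt ν A x σ = true ↔ leftE ν A σ + mfun ν A (σ ++ [false]) ≤ x := by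
  rw [bitAt, decide_eq_true_iff]

lemma bitAt_eq_false {ν : Measure Cantor} {A : List Bool → ℝ} {x : ℝ} {σ : List Bool} :
    bitAt ν A x σ = false ↔ x < leftE ν A σ + mfun ν A (σ ++ [false]) := by
  rw [bitAt, decide_eq_false_iff_not, not_le]

noncomputable def pth (ν : Measure Cantor) (A : List Bool → ℝ) (x : ℝ) : ℕ → List Bool
  | 0 => []
  | n+1 => pth ν A x n ++ [bitAt ν A x (pth ν A x n)]

lemma pth_length (ν : Measure Cantor) (A : List Bool → ℝ) (x : ℝ) (n : ℕ) :
    (pth ν A x n).length = n := by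
  induction n with
  | zero => rfl
  | succ n ih => rw [pth]; simp [ih]

lemma pth_concat_iff {ν : Measure Cantor} {A : List Bool → ℝ} {x : ℝ} {n : ℕ}
    {σ : List Bool} {ι : Bool} :
    pth ν A x (n+1) = σ ++ [ι] ↔ pth ν A x n = σ ∧ bitAt ν A x σ = ι := by
  rw [pth]
  constructor
  · intro h
    have h2 := List.append_inj h (by simpa [pth_length] using congrArg List.length h)
    have h3 : pth ν A x n = σ := h2.1
    refine ⟨h3, ?_⟩
    have := h2.2
    rw [h3] at this
    simpa using this
  · rintro ⟨h1, h2⟩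
    rw [h1, h2]

lemma meas_pth (ν : Measure Cantor) (A : List Bool → ℝ) (n : ℕ) (σ : List Bool) :
    MeasurableSet {x : ℝ | pth ν A x n = σ} := by
  induction n generalizing σ with
  | zero =>
    by_cases h : σ = []
    · subst h
      have : {x : ℝ | pth ν A x 0 = []} = Set.univ := by ext x; simp [pth]
      rw [this]; exact MeasurableSet.univ
    · have : {x : ℝ | pth ν A x 0 = σ} = ∅ := by
        ext x
        simp only [Set.mem_setOf_eq, Set.mem_empty_iff_false, iff_false, pth]
        exact fun hh => h hh.symm
      rw [this]; exact MeasurableSet.empty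
  | succ n ih =>
    rcases List.eq_nil_or_concat σ with rfl | ⟨τ, ι, rfl⟩
    · have : {x : ℝ | pth ν A x (n+1) = []} = ∅ := by
        ext x
        simp only [Set.mem_setOf_eq, Set.mem_empty_iff_false, iff_false]
        intro h
        have := congrArg List.length h
        rw [pth_length] at this
        simp at this
      rw [this]; exact MeasurableSet.empty
    · simp only [List.concat_eq_append]
      have hset : {x : ℝ | pth ν A x (n+1) = τ ++ [ι]} =
          {x : ℝ | pth ν A x n = τ} ∩ {x : ℝ | bitAt ν A x τ = ι} := by
        ext x; simp [pth_concat_iff, Set.mem_inter_iff]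
      rw [hset]
      refine (ih τ).inter ?_
      cases ι
      · have : {x : ℝ | bitAt ν A x τ = false} =
            Set.Iio (leftE ν A τ + mfun ν A (τ ++ [false])) := by
          ext x; simp [bitAt_eq_false]
        rw [this]; exact measurableSet_Iio
      · have : {x : ℝ | bitAt ν A x τ = true} =
            Set.Ici (leftE ν A τ + mfun ν A (τ ++ [false])) := by
          ext x; simp [bitAt_eq_true]
        rw [this]; exact measurableSet_Ici

section
variable (ν : Measure Cantor) [IsProbabilityMeasure ν] (hν : FullSupport ν)
variable (A : List Bool → ℝ) (hinc : ∀ σ τ : List Bool, σ <+: τ → A σ ≤ A τ)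
include hν hinc

lemma pth_interval (σ : List Bool) :
    {x : ℝ | pth ν A x σ.length = σ} ∩ Set.Ico 0 1 =
      Set.Ico (leftE ν A σ) (leftE ν A σ + mfun ν A σ) := by
  induction σ using List.reverseRecOn with
  | nil =>
    have : {x : ℝ | pth ν A x 0 = []} = Set.univ := by ext x; simp [pth]
    rw [List.length_nil, this, Set.univ_inter, leftE_nil, mfun_nil ν A]
    norm_num
  | append_singleton τ ι ih =>
    have hlen : (τ ++ [ι]).length = τ.length + 1 := by simp
    have hsplit := mfun_add ν hν A hinc τ
    have h0 := mfun_pos ν hν A (τ ++ [false])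
    have h1 := mfun_pos ν hν A (τ ++ [true])
    have hstep : {x : ℝ | pth ν A x (τ.length + 1) = τ ++ [ι]} =
        {x : ℝ | pth ν A x τ.length = τ} ∩ {x : ℝ | bitAt ν A x τ = ι} := by
      ext x; simp [pth_concat_iff]
    rw [hlen, hstep, Set.inter_comm _ {x : ℝ | bitAt ν A x τ = ι}, Set.inter_assoc, ih]
    cases ι
    · have : {x : ℝ | bitAt ν A x τ = false} =
          Set.Iio (leftE ν A τ + mfun ν A (τ ++ [false])) := by
        ext x; simp [bitAt_eq_false]
      rw [this, leftE_concat]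
      ext x
      simp only [Set.mem_inter_iff, Set.mem_Iio, Set.mem_Ico, Bool.false_eq_true, if_false,
        add_zero]
      constructor
      · rintro ⟨h2, h3, h4⟩; exact ⟨h3, h2⟩
      · rintro ⟨h2, h3⟩; exact ⟨h3, h2, by linarith⟩
    · have : {x : ℝ | bitAt ν A x τ = true} =
          Set.Ici (leftE ν A τ + mfun ν A (τ ++ [false])) := by
        ext x; simp [bitAt_eq_true]
      rw [this, leftE_concat]
      ext x
      simp only [Set.mem_inter_iff, Set.mem_Ici, Set.mem_Ico, if_true]
      constructor
      · rintro ⟨h2, h3, h4⟩; exact ⟨h2, by linarith⟩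
      · rintro ⟨h2, h3⟩; exact ⟨h2, by linarith, by linarith⟩
end

noncomputable def Tmap (ν : Measure Cantor) (A : List Bool → ℝ) (x : ℝ) : Cantor :=
  fun n => bitAt ν A x (pth ν A x n)

lemma pth_eq_pre (ν : Measure Cantor) (A : List Bool → ℝ) (x : ℝ) (n : ℕ) :
    pth ν A x n = pre (Tmap ν A x) n := by
  induction n with
  | zero => rfl
  | succ n ih => rw [pth, pre_succ, ih, Tmap, ← ih]

lemma Tmap_preimage (ν : Measure Cantor) (A : List Bool → ℝ) (σ : List Bool) :
    Tmap ν A ⁻¹' (cyl σ) = {x : ℝ | pth ν A x σ.length = σ} := by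
  ext x
  rw [Set.mem_preimage, mem_cyl_iff, Set.mem_setOf_eq, pth_eq_pre]

lemma Tmap_measurable (ν : Measure Cantor) (A : List Bool → ℝ) : Measurable (Tmap ν A) := by
  apply measurable_pi_lambda
  intro n
  apply measurable_to_countable'
  intro b
  have : (fun x => Tmap ν A x n) ⁻¹' {b} =
      ⋃ σ : List Bool, ({x : ℝ | pth ν A x n = σ} ∩ {x : ℝ | bitAt ν A x σ = b}) := by
    ext x
    simp only [Set.mem_preimage, Set.mem_singleton_iff, Set.mem_iUnion, Set.mem_inter_iff,
      Set.mem_setOf_eq, Tmap]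
    constructor
    · intro h; exact ⟨pth ν A x n, rfl, h⟩
    · rintro ⟨σ, h1, h2⟩; rw [h1]; exact h2
  rw [this]
  apply MeasurableSet.iUnion
  intro σ
  refine (meas_pth ν A n σ).inter ?_
  cases b
  · have : {x : ℝ | bitAt ν A x σ = false} =
        Set.Iio (leftE ν A σ + mfun ν A (σ ++ [false])) := by
      ext x; simp [bitAt_eq_false]
    rw [this]; exact measurableSet_Iio
  · have : {x : ℝ | bitAt ν A x σ = true} =
        Set.Ici (leftE ν A σ + mfun ν A (σ ++ [false])) := by
      ext x; simp [bitAt_eq_true]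
    rw [this]; exact measurableSet_Ici

noncomputable def muMeas (ν : Measure Cantor) (A : List Bool → ℝ) : Measure Cantor :=
  Measure.map (Tmap ν A) (volume.restrict (Set.Ico (0:ℝ) 1))

section
variable (ν : Measure Cantor) [IsProbabilityMeasure ν] (hν : FullSupport ν)
variable (A : List Bool → ℝ) (hinc : ∀ σ τ : List Bool, σ <+: τ → A σ ≤ A τ)
include hν hinc

lemma muMeas_cyl (σ : List Bool) :
    muMeas ν A (cyl σ) = ENNReal.ofReal (mfun ν A σ) := by
  rw [muMeas, Measure.map_apply (Tmap_measurable ν A) (cyl_measurable σ),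
    Measure.restrict_apply (Tmap_measurable ν A (cyl_measurable σ)),
    Tmap_preimage, pth_interval ν hν A hinc σ, Real.volume_Ico]
  congr 1
  ring
end


section
variable (ν : Measure Cantor) [IsProbabilityMeasure ν] (hν : FullSupport ν)
variable (A : List Bool → ℝ) (hinc : ∀ σ τ : List Bool, σ <+: τ → A σ ≤ A τ)
include hν hinc

lemma muMeas_prob : IsProbabilityMeasure (muMeas ν A) := by
  constructor
  rw [← cyl_nil, muMeas_cyl ν hν A hinc, mfun_nil ν A, ENNReal.ofReal_one]

lemma muMeas_full : FullSupport (muMeas ν A) := by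
  intro σ
  rw [muMeas_cyl ν hν A hinc]
  exact ENNReal.ofReal_pos.2 (mfun_pos ν hν A σ)

lemma Lfun_eq (σ : List Bool) : Lfun (muMeas ν A) ν σ = Ldy ν A σ := by
  rw [Lfun, muMeas_cyl ν hν A hinc, ENNReal.toReal_ofReal (mfun_pos ν hν A σ).le, mfun,
    mul_div_assoc, div_self (nur_pos ν hν σ).ne', mul_one, Real.log_exp, neg_neg]
end


/-- Given an increasing non-negative dyadic function `A` with `A(∅)=0` and `A(σ0)=A(σ1)`,
there is a full-support probability measure `μ` such that `A` is the predictable process of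
the Doob decomposition of the dyadic `ν`-submartingale `L(σ) = −ln(μ([σ])/ν([σ]))`: `L(∅)=0`
and `A(σι) − A(σ) = (L(σ0)ν(σ0|σ) + L(σ1)ν(σ1|σ)) − L(σ)`. -/
theorem stmt15 (ν : Measure Cantor) [IsProbabilityMeasure ν] (hν : FullSupport ν)
    (A : List Bool → ℝ) (hA0 : A [] = 0) (hnn : ∀ σ, 0 ≤ A σ) (hinc : IncrDy A)
    (hsame : ∀ σ : List Bool, A (σ ++ [false]) = A (σ ++ [true])) :
    ∃ μ : Measure Cantor, IsProbabilityMeasure μ ∧ FullSupport μ ∧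
      Lfun μ ν [] = 0 ∧
      (∀ (σ : List Bool) (ι : Bool),
        A (σ ++ [ι]) - A σ =
          (Lfun μ ν (σ ++ [false]) * cp ν (σ ++ [false]) σ +
            Lfun μ ν (σ ++ [true]) * cp ν (σ ++ [true]) σ) - Lfun μ ν σ) := by
  refine ⟨muMeas ν A, muMeas_prob ν hν A hinc, muMeas_full ν hν A hinc, ?_, ?_⟩
  · rw [Lfun_eq ν hν A hinc, Ldy_nil]
  · intro σ ι
    rw [Lfun_eq ν hν A hinc, Lfun_eq ν hν A hinc, Lfun_eq ν hν A hinc, cp_true ν hν σ]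
    have hs := (Ldy_spec ν hν A hinc σ).1
    have hι : A (σ ++ [ι]) = A (σ ++ [false]) := by
      cases ι
      · rfl
      · exact (hsame σ).symm
    rw [hι]
    linarith [hs]
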